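/- Let ℜ be a nonempty loc-deterministic set of P-rules satisfying Assumptions 1 and 2 in which every constant occurs. Consider the imitation rule I: its conclusion is C = (x ↦ (y1, ..., yk) * φ) ⋏ ξ ⊢_ℜ^V (p(x, z⃗) * ψ) ⋏ ζ and its premise is P = (x ↦ (y1, ..., yk) * φ) ⋏ ξ ⊢_ℜ^V (x ↦ (y1, ..., yk) * ψ'σ * ψ) ⋏ ζ, under the side conditions: (i) p(x, z⃗) ⇐_ℜ (x ↦ (u1, ..., uk) * ψ') ⋏ ζ'; (ii) σ is a substitution with dom(σ) ⊆ {u1, ..., uk} ∖ ({x} ∪ z⃗); (iii) uiσ = yi for all i ∈ {1, ..., k}; (iv) (x ↦ (y1, ..., yk) * φ) ⋏ ξ ▷_V ζ'σ. Then rule I is sound and invertible: for every heap h, C admits a counter-model of the form (s, h) if and only if P admits a counter-model of the form (s', h). -/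

import Mathlib

open scoped Classical

namespace SLID

/-! ## Signatures, terms and formulas -/

/-- A signature: a set of sorts with a distinguished sort `loc` of memory locations,
predicate symbols with profiles (the first parameter being of sort `loc`),
and constants of each sort (no constants of sort `loc`). -/
structure Sig : Type 1 where
  Srt : Type
  loc : Srt
  Pred : Type
  arity : Pred → ℕ
  arity_pos : ∀ p, 0 < arity p
  psort : Pred → ℕ → Srt
  psort_zero : ∀ p, psort p 0 = loc
  Const : Srt → Type
  noLocConst : IsEmpty (Const loc)

variable {σ : Sig}

/-- Terms: variables of each sort (a countably infinite supply, indexed by `ℕ`)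
and constants. -/
inductive Term (σ : Sig) : Type where
  | var (s : σ.Srt) (n : ℕ) : Term σ
  | cst (s : σ.Srt) (c : σ.Const s) : Term σ

/-- The sort of a term. -/
def Term.sort : Term σ → σ.Srt
  | .var s _ => s
  | .cst s _ => s

/-- Variables, as (sort, index) pairs. -/
abbrev Vr (σ : Sig) : Type := σ.Srt × ℕ

/-- The set of variables of a term. -/
def Term.varSet : Term σ → Set (Vr σ)
  | .var s n => {(s, n)}
  | .cst _ _ => ∅

/-- Spatial atoms: points-to atoms `x ↦ (t₁,…,tₖ)` and predicate atoms
`p(x, t₂,…,tₙ)`.  The root `x` is a variable of sort `loc`, represented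
by its index. -/
inductive SAtom (σ : Sig) : Type where
  | pto (x : ℕ) (ts : List (Term σ)) : SAtom σ
  | pred (p : σ.Pred) (x : ℕ) (args : List (Term σ)) : SAtom σ

/-- The root of a spatial atom. -/
def SAtom.root : SAtom σ → ℕ
  | .pto x _ => x
  | .pred _ x _ => x

/-- The term at position `i` (0-indexed; position `0` is the root) of a
predicate atom. -/
def SAtom.argAt : SAtom σ → ℕ → Option (Term σ)
  | .pred _ x _, 0 => some (Term.var σ.loc x)
  | .pred _ _ args, j + 1 => args[j]?
  | .pto _ _, _ => none

/-- The set of terms occurring in a spatial atom. -/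
def SAtom.termSet : SAtom σ → Set (Term σ)
  | .pto x ts => insert (Term.var σ.loc x) {t | t ∈ ts}
  | .pred _ x args => insert (Term.var σ.loc x) {t | t ∈ args}

/-- The set of variables of a spatial atom. -/
def SAtom.varSet (a : SAtom σ) : Set (Vr σ) := ⋃ t ∈ SAtom.termSet a, Term.varSet t

/-- Pure atoms: equations `t ≈ u` and disequations `t ≉ u`. -/
inductive PAtom (σ : Sig) : Type where
  | eq (t u : Term σ) : PAtom σ
  | ne (t u : Term σ) : PAtom σ

/-- The set of terms occurring in a pure atom. -/
def PAtom.termSet : PAtom σ → Set (Term σ)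
  | .eq t u => {t, u}
  | .ne t u => {t, u}

/-- The set of variables of a pure atom. -/
def PAtom.varSet (a : PAtom σ) : Set (Vr σ) := ⋃ t ∈ PAtom.termSet a, Term.varSet t

/-- Spatial formulas: finite `*`-conjunctions of spatial atoms, taken modulo
associativity-commutativity of `*` (hence multisets); `emp` is `0` and `*` is `+`. -/
abbrev Spatial (σ : Sig) : Type := Multiset (SAtom σ)

/-- Pure formulas: finite conjunctions of equations and disequations, taken modulo
associativity-commutativity of `∧` (hence multisets); `⊤` is `0` and `∧` is `+`. -/
abbrev PureF (σ : Sig) : Type := Multiset (PAtom σ)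

/-- A symbolic heap `φ ⋏ ξ` with `φ` spatial and `ξ` pure. -/
structure SymHeap (σ : Sig) : Type where
  sp : Spatial σ
  pu : PureF σ

/-- The set of variables of a spatial formula. -/
def Spatial.varSet (φ : Spatial σ) : Set (Vr σ) := {v | ∃ a ∈ φ, v ∈ SAtom.varSet a}

/-- The set of variables of a pure formula. -/
def PureF.varSet (ξ : PureF σ) : Set (Vr σ) := {v | ∃ a ∈ ξ, v ∈ PAtom.varSet a}

/-- The set of variables of a symbolic heap. -/
def SymHeap.varSet (l : SymHeap σ) : Set (Vr σ) := Spatial.varSet l.sp ∪ PureF.varSet l.pu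

/-- The set of terms occurring in a symbolic heap. -/
def SymHeap.termSet (l : SymHeap σ) : Set (Term σ) :=
  {t | ∃ a ∈ l.sp, t ∈ SAtom.termSet a} ∪ {t | ∃ a ∈ l.pu, t ∈ PAtom.termSet a}

/-- `alloc(φ)`: the multiset of roots of the spatial atoms of `φ`
(as indices of variables of sort `loc`). -/
def alloc (φ : Spatial σ) : Multiset ℕ := φ.map SAtom.root

/-- `alloc(λ)` for a symbolic heap `λ`. -/
def SymHeap.alloc (l : SymHeap σ) : Multiset ℕ := SLID.alloc l.sp

/-- Sort-correctness of a pure atom. -/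
def PAtom.WF : PAtom σ → Prop
  | .eq t u => Term.sort t = Term.sort u
  | .ne t u => Term.sort t = Term.sort u

/-- Sort-correctness of a spatial atom. -/
def SAtom.WF : SAtom σ → Prop
  | .pto _ _ => True
  | .pred p _ args => args.length + 1 = σ.arity p ∧
      ∀ (i : ℕ) (hi : i < args.length), Term.sort (args[i]'hi) = σ.psort p (i + 1)

/-- Sort-correctness of a symbolic heap. -/
def SymHeap.WF (l : SymHeap σ) : Prop := (∀ a ∈ l.sp, SAtom.WF a) ∧ (∀ a ∈ l.pu, PAtom.WF a)

/-! ## Inductive rules -/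

/-- An inductive rule `p(x₁,…,xₙ) ⇐ λ`: the parameters `x₁,…,xₙ` are pairwise
distinct variables of the profile sorts of the head `p`, and the body `λ` is a
symbolic heap. -/
structure Rule (σ : Sig) : Type where
  head : σ.Pred
  param : ℕ → ℕ
  param_inj : ∀ i j, i < σ.arity head → j < σ.arity head → i ≠ j →
    ((σ.psort head i, param i) : Vr σ) ≠ ((σ.psort head j, param j) : Vr σ)
  body : SymHeap σ
  body_wf : SymHeap.WF body

/-- The `i`-th parameter of a rule, as a term. -/
def Rule.paramTerm (r : Rule σ) (i : ℕ) : Term σ := Term.var (σ.psort r.head i) (r.param i)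

/-- The set of parameters of a rule, as terms. -/
def Rule.paramTermSet (r : Rule σ) : Set (Term σ) := {t | ∃ i < σ.arity r.head, t = r.paramTerm i}

/-- The set of parameters of a rule, as variables. -/
def Rule.paramVarSet (r : Rule σ) : Set (Vr σ) :=
  {v | ∃ i < σ.arity r.head, v = ((σ.psort r.head i, r.param i) : Vr σ)}

/-- The set of terms occurring in (the body of) a rule. -/
def Rule.termSet (r : Rule σ) : Set (Term σ) := SymHeap.termSet r.body

/-- P-rules: rules of the form
`p(x₁,…,xₙ) ⇐ (x₁ ↦ (y₁,…,yₖ) * q₁(z₁,u⃗₁) * ⋯ * qₘ(zₘ,u⃗ₘ)) ⋏ ξ` where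
(1) `ξ` is a conjunction of disequations `u ≉ v` with `u ∈ {x₁,…,xₙ,y₁,…,yₖ}`
    and `v ∈ {y₁,…,yₖ} ∖ {x₁,…,xₙ}`;
(2) `{z₁,…,zₘ} = ({y₁,…,yₖ} ∖ {x₁,…,xₙ}) ∩ V_loc`, with `z₁,…,zₘ` pairwise distinct;
(3) every element of each `u⃗ᵢ` is a parameter, one of the `yⱼ`, or a constant. -/
def Rule.IsPRule (r : Rule σ) : Prop :=
  ∃ (ys : List (Term σ)) (ps : Multiset (SAtom σ)),
    r.body.sp = (SAtom.pto (r.param 0) ys) ::ₘ ps ∧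
    (∀ a ∈ ps, ∃ (q : σ.Pred) (z : ℕ) (args : List (Term σ)), a = SAtom.pred q z args) ∧
    (∀ pa ∈ r.body.pu, ∃ u v : Term σ, pa = PAtom.ne u v ∧
      (u ∈ Rule.paramTermSet r ∨ u ∈ ys) ∧ (v ∈ ys ∧ v ∉ Rule.paramTermSet r)) ∧
    ({t : Term σ | ∃ a ∈ ps, t = Term.var σ.loc (SAtom.root a)} =
      {t : Term σ | t ∈ ys ∧ t ∉ Rule.paramTermSet r ∧ Term.sort t = σ.loc}) ∧
    Multiset.Nodup (Multiset.map SAtom.root ps) ∧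
    (∀ a ∈ ps, ∀ (q : σ.Pred) (z : ℕ) (args : List (Term σ)), a = SAtom.pred q z args →
      ∀ t ∈ args, t ∈ Rule.paramTermSet r ∨ t ∈ ys ∨ ∃ (s : σ.Srt) (c : σ.Const s), t = Term.cst s c)

/-- Productive predicate symbols (least fixpoint): `p` is productive w.r.t. `R`
if `R` contains a rule for `p` all of whose body predicates are productive. -/
inductive Productive (R : Set (Rule σ)) : σ.Pred → Prop where
  | intro (r : Rule σ) : r ∈ R →
      (∀ (q : σ.Pred) (z : ℕ) (args : List (Term σ)),
        SAtom.pred q z args ∈ r.body.sp → Productive R q) →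
      Productive R r.head

/-- `out_ℜ(p)` (0-indexed): outgoing parameter indices, as a least fixpoint. -/
inductive OutParam (R : Set (Rule σ)) : σ.Pred → ℕ → Prop where
  | pto (r : Rule σ) (i : ℕ) (ts : List (Term σ)) :
      r ∈ R → i < σ.arity r.head → σ.psort r.head i = σ.loc →
      SAtom.pto (r.param 0) ts ∈ r.body.sp → r.paramTerm i ∈ ts →
      OutParam R r.head i
  | pred (r : Rule σ) (i : ℕ) (q : σ.Pred) (z : ℕ) (args : List (Term σ)) (j : ℕ) :
      r ∈ R → i < σ.arity r.head → σ.psort r.head i = σ.loc →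
      SAtom.pred q z args ∈ r.body.sp → OutParam R q j →
      SAtom.argAt (SAtom.pred q z args) j = some (r.paramTerm i) →
      OutParam R r.head i

/-- The relation `x →_φ y` on variables of sort `loc` (Definition of `→`):
`φ` contains a predicate atom with root `x` and `y` at an outgoing position,
or a points-to atom with root `x` and `y` in its tuple. -/
def PathTo (R : Set (Rule σ)) (φ : Spatial σ) (x y : ℕ) : Prop :=
  (∃ ts, SAtom.pto x ts ∈ φ ∧ Term.var σ.loc y ∈ ts) ∨
  (∃ (p : σ.Pred) (args : List (Term σ)) (i : ℕ), SAtom.pred p x args ∈ φ ∧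
    OutParam R p i ∧ SAtom.argAt (SAtom.pred p x args) i = some (Term.var σ.loc y))

/-! ## Substitutions and renamings -/

/-- A (sort-preserving) substitution. -/
structure Subst (σ : Sig) : Type where
  app : σ.Srt → ℕ → Term σ
  sorted : ∀ s n, Term.sort (app s n) = s

def Term.subst (θ : Subst σ) : Term σ → Term σ
  | .var s n => θ.app s n
  | .cst s c => .cst s c

/-- The index of a variable of sort `loc` (terms of sort `loc` are always
variables, since there are no constants of sort `loc`). -/
def Term.locIdx : Term σ → ℕ
  | .var _ n => n
  | .cst _ _ => 0

def Subst.locApp (θ : Subst σ) (x : ℕ) : ℕ := Term.locIdx (θ.app σ.loc x)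

def SAtom.subst (θ : Subst σ) : SAtom σ → SAtom σ
  | .pto x ts => .pto (θ.locApp x) (ts.map (Term.subst θ))
  | .pred p x args => .pred p (θ.locApp x) (args.map (Term.subst θ))

def PAtom.subst (θ : Subst σ) : PAtom σ → PAtom σ
  | .eq t u => .eq (Term.subst θ t) (Term.subst θ u)
  | .ne t u => .ne (Term.subst θ t) (Term.subst θ u)

def SymHeap.subst (θ : Subst σ) (l : SymHeap σ) : SymHeap σ :=
  ⟨l.sp.map (SAtom.subst θ), l.pu.map (PAtom.subst θ)⟩

/-- `p(t₁,…,tₙ) ⇐_ℜ λ`: `λ` is obtained from the body of a rule of `R` for `p`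
by renaming its non-parameter variables injectively to variables not occurring in
`t₁,…,tₙ`, and substituting each `tᵢ` for the `i`-th parameter. -/
def Unfolds (R : Set (Rule σ)) (p : σ.Pred) (targs : List (Term σ)) (lam : SymHeap σ) : Prop :=
  ∃ r ∈ R, r.head = p ∧ targs.length = σ.arity p ∧
  ∃ θ : Subst σ,
    (∀ (i : ℕ) (hi : i < targs.length),
      θ.app (σ.psort p i) (r.param i) = targs[i]'hi) ∧
    (∀ v : Vr σ, v ∉ Rule.paramVarSet r →
      ∃ m : ℕ, θ.app v.1 v.2 = Term.var v.1 m ∧ ∀ t ∈ targs, (v.1, m) ∉ Term.varSet t) ∧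
    (∀ v w : Vr σ, v ∉ Rule.paramVarSet r → w ∉ Rule.paramVarSet r →
      θ.app v.1 v.2 = θ.app w.1 w.2 → v = w) ∧
    lam = SymHeap.subst θ r.body

/-- Equivalence of symbolic heaps up to an injective renaming of variables fixing
the variables in `F`. -/
def VarRenEquiv (F : Set (Vr σ)) (l1 l2 : SymHeap σ) : Prop :=
  ∃ θ : Subst σ,
    (∀ v : Vr σ, ∃ m : ℕ, θ.app v.1 v.2 = Term.var v.1 m) ∧
    (∀ v w : Vr σ, θ.app v.1 v.2 = θ.app w.1 w.2 → v = w) ∧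
    (∀ v ∈ F, θ.app v.1 v.2 = Term.var v.1 v.2) ∧
    l2 = SymHeap.subst θ l1

/-! ## Interpretations, stores and heaps -/

/-- An interpretation: pairwise disjoint countably infinite universes (one per
sort; disjointness is by construction of `Interp.Val`) together with an injective
interpretation of the constants. -/
structure Interp (σ : Sig) : Type 1 where
  U : σ.Srt → Type
  countable : ∀ s, Countable (U s)
  infinite : ∀ s, Infinite (U s)
  cval : {s : σ.Srt} → σ.Const s → U s
  cval_inj : ∀ s : σ.Srt, Function.Injective (fun c : σ.Const s => cval c)

/-- The universe `𝔘_loc` of locations. -/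
abbrev Interp.Loc {σ : Sig} (I : Interp σ) : Type := I.U σ.loc

/-- The global universe `𝔘` (disjoint union of the sort universes). -/
abbrev Interp.Val {σ : Sig} (I : Interp σ) : Type := Σ s : σ.Srt, I.U s

/-- A store maps every variable to an element of the universe of its sort
(constants are interpreted by `cval`, see `tval`). -/
abbrev Store {σ : Sig} (I : Interp σ) : Type := ∀ s : σ.Srt, ℕ → I.U s

section Stores

variable {I : Interp σ}

/-- The value of a term under a store. -/
def tval (st : Store I) : Term σ → I.Val
  | .var s n => ⟨s, st s n⟩
  | .cst s c => ⟨s, I.cval c⟩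

/-- The value of a term under a store, typed by the sort of the term. -/
def tvalSorted (st : Store I) : (t : Term σ) → I.U (Term.sort t)
  | .var s n => st s n
  | .cst _ c => I.cval c

end Stores

/-- Heaps: finite partial maps from locations to finite tuples of values. -/
def Heap {σ : Sig} (I : Interp σ) : Type :=
  { f : I.Loc → Option (List I.Val) // {l : I.Loc | f l ≠ none}.Finite }

namespace Heap

variable {I : Interp σ}

/-- The domain of a heap (the set of allocated locations). -/
def dom (h : Heap I) : Set I.Loc := {l | h.1 l ≠ none}

/-- The empty heap. -/
def empty (I : Interp σ) : Heap I :=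
  ⟨fun _ => none, by
    have : {l : I.Loc | (none : Option (List I.Val)) ≠ none} = ∅ := by
      ext l; simp
    rw [this]; exact Set.finite_empty⟩

/-- Disjointness of heaps. -/
def Disj (h1 h2 : Heap I) : Prop := dom h1 ∩ dom h2 = ∅

/-- Union of heaps (used on disjoint heaps, where it is the disjoint union `⊎`). -/
def union (h1 h2 : Heap I) : Heap I :=
  ⟨fun l => (h1.1 l).orElse fun _ => h2.1 l, by
    apply (h1.2.union h2.2).subset
    intro l hl
    simp only [Set.mem_setOf_eq] at hl
    simp only [Set.mem_union, Set.mem_setOf_eq]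
    rcases e1 : h1.1 l with _ | vs
    · right
      intro e2
      rw [e1, e2] at hl
      exact hl rfl
    · left
      simp [e1]⟩

/-- The one-point heap `{l ↦ vs}`. -/
noncomputable def single (l : I.Loc) (vs : List I.Val) : Heap I :=
  ⟨fun l' => if l' = l then some vs else none, by
    apply (Set.finite_singleton l).subset
    intro x hx
    simp only [Set.mem_setOf_eq] at hx
    simp only [Set.mem_singleton_iff]
    by_contra hne
    rw [if_neg hne] at hx
    exact hx rfl⟩

/-- `h1 ⊆ h2`: `h2 = h1 ⊎ h3` for some heap `h3` disjoint from `h1`. -/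
def Sub (h1 h2 : Heap I) : Prop := ∃ h3 : Heap I, Disj h1 h3 ∧ h2 = union h1 h3

/-- The relation `ℓ →_h ℓ'`: `ℓ ∈ dom(h)` and `ℓ'` is a component (of sort `loc`)
of the tuple `h(ℓ)`. -/
def conn (h : Heap I) (l l' : I.Loc) : Prop :=
  ∃ vs, h.1 l = some vs ∧ (⟨σ.loc, l'⟩ : I.Val) ∈ vs

/-- `ref(h)`: the set of locations occurring in `h` (allocated or referred to). -/
def ref (h : Heap I) : Set I.Loc :=
  dom h ∪ {l | ∃ l0 vs, h.1 l0 = some vs ∧ (⟨σ.loc, l⟩ : I.Val) ∈ vs}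

end Heap

section PureSem

variable {I : Interp σ}

/-- Satisfaction of a pure atom (depends only on the store). -/
def PAtom.holds (st : Store I) : PAtom σ → Prop
  | .eq t u => tval st t = tval st u
  | .ne t u => tval st t ≠ tval st u

/-- Satisfaction of a pure formula (depends only on the store). -/
def pureHolds (st : Store I) (ξ : PureF σ) : Prop := ∀ a ∈ ξ, PAtom.holds st a

/-- The store `s ∘ σ` mapping every variable `x` to `s(σ(x))`. -/
def Store.comp (st : Store I) (θ : Subst σ) : Store I :=
  fun s n => (θ.sorted s n) ▸ tvalSorted st (θ.app s n)

end PureSem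

/-! ## Satisfaction -/

mutual
  /-- Satisfaction of a single spatial atom; predicate atoms are interpreted by
  unfolding with the rules of `R` (least fixpoint). -/
  inductive SatA (R : Set (Rule σ)) (I : Interp σ) : Store I → Heap I → SAtom σ → Prop where
    | pto (st : Store I) (x : ℕ) (ts : List (Term σ)) :
        SatA R I st (Heap.single (st σ.loc x) (ts.map (tval st))) (SAtom.pto x ts)
    | pred (st : Store I) (h : Heap I) (p : σ.Pred) (x : ℕ) (args : List (Term σ))
        (r : Rule σ) (st' : Store I) :
        r ∈ R → r.head = p →
        tval st' (r.paramTerm 0) = tval st (Term.var σ.loc x) →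
        (∀ (i : ℕ) (hi : i < args.length),
          tval st' (r.paramTerm (i + 1)) = tval st (args[i]'hi)) →
        SatS R I st' h r.body.sp →
        pureHolds st' r.body.pu →
        SatA R I st h (SAtom.pred p x args)

  /-- Satisfaction of a spatial formula: the heap splits into disjoint parts,
  one per atom. -/
  inductive SatS (R : Set (Rule σ)) (I : Interp σ) : Store I → Heap I → Spatial σ → Prop where
    | emp (st : Store I) : SatS R I st (Heap.empty I) 0
    | cons (st : Store I) (h1 h2 : Heap I) (a : SAtom σ) (φ : Spatial σ) :
        SatA R I st h1 a → SatS R I st h2 φ → Heap.Disj h1 h2 →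
        SatS R I st (Heap.union h1 h2) (a ::ₘ φ)
end

/-- Satisfaction `(s,h) ⊨_ℜ φ ⋏ ξ` of a symbolic heap. -/
def SatH (R : Set (Rule σ)) (I : Interp σ) (st : Store I) (h : Heap I) (l : SymHeap σ) : Prop :=
  SatS R I st h l.sp ∧ pureHolds st l.pu

/-! ## Classes of rule sets -/

/-- A deterministic set of rules: two distinct rules with the same head never
overlap (the conjunction of the equations identifying their parameters and
points-to tuples with their pure constraints is unsatisfiable; the two rules
are renamed apart, whence the two independent stores). -/
def Deterministic (R : Set (Rule σ)) (I : Interp σ) : Prop :=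
  ∀ r1 ∈ R, ∀ r2 ∈ R, r1 ≠ r2 → r1.head = r2.head →
  ∀ (ys1 : List (Term σ)) (ps1 : Multiset (SAtom σ))
    (ys2 : List (Term σ)) (ps2 : Multiset (SAtom σ)),
    r1.body.sp = (SAtom.pto (r1.param 0) ys1) ::ₘ ps1 →
    r2.body.sp = (SAtom.pto (r2.param 0) ys2) ::ₘ ps2 →
    ¬ ∃ st1 st2 : Store I,
      (∀ i < σ.arity r1.head, tval st1 (r1.paramTerm i) = tval st2 (r2.paramTerm i)) ∧
      ys1.map (tval st1) = ys2.map (tval st2) ∧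
      pureHolds st1 r1.body.pu ∧ pureHolds st2 r2.body.pu

/-- The standing hypotheses: `R` is a nonempty loc-deterministic set of P-rules
satisfying Assumptions 1 (every predicate is productive) and 2 (every loc-sorted
parameter index `i ≥ 2`, here 0-indexed `i ≥ 1`, is an outgoing parameter index),
in which every constant occurs. -/
structure GoodRules (R : Set (Rule σ)) (I : Interp σ) : Prop where
  nonempty : R.Nonempty
  prules : ∀ r ∈ R, Rule.IsPRule r
  deterministic : Deterministic R I
  loc_diseq : ∀ r ∈ R, ∀ pa ∈ r.body.pu,
    ∃ x y : ℕ, pa = PAtom.ne (Term.var σ.loc x) (Term.var σ.loc y)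
  productive : ∀ p : σ.Pred, Productive R p
  out_total : ∀ (p : σ.Pred) (i : ℕ), 1 ≤ i → i < σ.arity p → σ.psort p i = σ.loc →
    OutParam R p i
  const_occurs : ∀ (s : σ.Srt) (c : σ.Const s), ∃ r ∈ R, Term.cst s c ∈ Rule.termSet r

/-! ## Sequents -/

/-- A sequent `λ ⊢_ℜ^V γ`. -/
structure Sequent (σ : Sig) : Type where
  lhs : SymHeap σ
  rhs : SymHeap σ
  V : Multiset ℕ

/-- A store is injective on a multiset `V` of loc-variables:
`{x,y} ⊆ₘ V → s(x) ≠ s(y)`. -/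
def StoreInjOn {I : Interp σ} (st : Store I) (V : Multiset ℕ) : Prop :=
  ∀ x y : ℕ, ({x, y} : Multiset ℕ) ≤ V → st σ.loc x ≠ st σ.loc y

/-- A counter-model of a sequent. -/
def CounterModel (R : Set (Rule σ)) (I : Interp σ) (S : Sequent σ)
    (st : Store I) (h : Heap I) : Prop :=
  SatH R I st h S.lhs ∧ ¬ SatH R I st h S.rhs ∧
  (∀ x ∈ S.V, st σ.loc x ∉ Heap.dom h) ∧ StoreInjOn st S.V

/-- Validity of a sequent: no counter-model. -/
def SeqValid (R : Set (Rule σ)) (I : Interp σ) (S : Sequent σ) : Prop :=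
  ¬ ∃ (st : Store I) (h : Heap I), CounterModel R I S st h

/-- Axioms (modulo AC): `φ ⋏ (ξ ∧ ξ') ⊢ φ ⋏ ξ`; `φ ⋏ (ξ ∧ x ≉ x) ⊢ γ`;
a heap-unsatisfiable left-hand side; an allocated variable in `V`, or a
repeated variable in `V`. -/
def IsAxiom (S : Sequent σ) : Prop :=
  (S.lhs.sp = S.rhs.sp ∧ ∀ a ∈ S.rhs.pu, a ∈ S.lhs.pu) ∨
  (∃ v : Vr σ, PAtom.ne (Term.var v.1 v.2) (Term.var v.1 v.2) ∈ S.lhs.pu) ∨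
  (¬ (alloc S.lhs.sp).Nodup) ∨
  (∃ x ∈ alloc S.lhs.sp, x ∈ S.V) ∨
  (¬ S.V.Nodup)

/-- The relation `λ ▷_V ξ` (Definition of `▷`). -/
def Entails (lam : SymHeap σ) (V : Multiset ℕ) (ξ : PureF σ) : Prop :=
  ∀ ζ ∈ ξ,
    ζ ∈ lam.pu ∨
    (∃ v : Vr σ, ζ = PAtom.eq (Term.var v.1 v.2) (Term.var v.1 v.2)) ∨
    (∃ (s1 : σ.Srt) (c1 : σ.Const s1) (s2 : σ.Srt) (c2 : σ.Const s2),
      ζ = PAtom.ne (Term.cst s1 c1) (Term.cst s2 c2) ∧ Term.cst s1 c1 ≠ Term.cst s2 c2) ∨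
    (∃ x1 x2 : ℕ, ζ = PAtom.ne (Term.var σ.loc x1) (Term.var σ.loc x2) ∧
      ({x1, x2} : Multiset ℕ) ≤ SymHeap.alloc lam + V)

/-- A `→`-compatible model of a spatial formula. -/
def PathCompatible (R : Set (Rule σ)) (I : Interp σ) (st : Store I) (h : Heap I)
    (φ : Spatial σ) : Prop :=
  SatS R I st h φ ∧
  ∀ x y : ℕ, Relation.ReflTransGen (Heap.conn h) (st σ.loc x) (st σ.loc y) →
    Relation.ReflTransGen (PathTo R φ) x y

/-! ## 𝔘-mappings -/

/-- A `𝔘`-mapping: a sort-preserving map on the universe fixing the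
interpretations of constants. -/
structure UMap {σ : Sig} (I : Interp σ) : Type where
  f : ∀ s : σ.Srt, I.U s → I.U s
  fix_const : ∀ (s : σ.Srt) (c : σ.Const s), f s (I.cval c) = I.cval c

/-- A `𝔘`-mapping, as a map on `𝔘`. -/
def UMap.onVal {σ : Sig} {I : Interp σ} (ν : UMap I) : I.Val → I.Val :=
  fun v => ⟨v.1, ν.f v.1 v.2⟩

/-- The store `ν ∘ s`. -/
def UMap.compStore {σ : Sig} {I : Interp σ} (ν : UMap I) (st : Store I) : Store I :=
  fun s n => ν.f s (st s n)

section HEAP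
variable {σ : Sig} {I : Interp σ}

namespace Heap

lemma ext' {h1 h2 : Heap I} (h : ∀ l, h1.1 l = h2.1 l) : h1 = h2 :=
  Subtype.ext (funext h)

lemma mem_dom {h : Heap I} {l : I.Loc} : l ∈ dom h ↔ h.1 l ≠ none := Iff.rfl

lemma union_val (h1 h2 : Heap I) (l : I.Loc) :
    (union h1 h2).1 l = (h1.1 l).orElse (fun _ => h2.1 l) := rfl

lemma union_val_left {h1 h2 : Heap I} {l : I.Loc} (h : l ∈ dom h1) :
    (union h1 h2).1 l = h1.1 l := by
  rw [union_val]
  rcases e : h1.1 l with _ | vs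
  · exact absurd e h
  · rfl

lemma union_val_right {h1 h2 : Heap I} {l : I.Loc} (h : l ∉ dom h1) :
    (union h1 h2).1 l = h2.1 l := by
  rw [union_val]
  rcases e : h1.1 l with _ | vs
  · rfl
  · exact absurd (by rw [mem_dom, e]; simp) h

lemma dom_union (h1 h2 : Heap I) : dom (union h1 h2) = dom h1 ∪ dom h2 := by
  ext l
  simp only [dom, Set.mem_setOf_eq, Set.mem_union, union_val]
  rcases e : h1.1 l with _ | vs <;> simp [Option.orElse]

lemma dom_single (l : I.Loc) (vs : List I.Val) : dom (single l vs) = {l} := by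
  ext l'
  simp only [dom, single, Set.mem_setOf_eq, Set.mem_singleton_iff]
  by_cases h : l' = l <;> simp [h]

lemma single_val_self (l : I.Loc) (vs : List I.Val) : (single l vs).1 l = some vs := by
  simp [single]

lemma disj_iff {h1 h2 : Heap I} : Disj h1 h2 ↔ ∀ l, l ∈ dom h1 → l ∉ dom h2 := by
  unfold Disj
  rw [Set.eq_empty_iff_forall_notMem]
  constructor
  · intro h l h1 h2; exact h l ⟨h1, h2⟩
  · rintro h l ⟨hl1, hl2⟩; exact h l hl1 hl2

lemma disj_comm {h1 h2 : Heap I} (h : Disj h1 h2) : Disj h2 h1 := by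
  rw [disj_iff] at h ⊢; intro l hl2 hl1; exact h l hl1 hl2

lemma union_assoc (h1 h2 h3 : Heap I) :
    union (union h1 h2) h3 = union h1 (union h2 h3) := by
  apply ext'; intro l
  simp only [union_val]
  rcases h1.1 l with _ | vs <;> simp [Option.orElse]

lemma union_comm {h1 h2 : Heap I} (h : Disj h1 h2) : union h1 h2 = union h2 h1 := by
  rw [disj_iff] at h
  apply ext'; intro l
  simp only [union_val]
  rcases e1 : h1.1 l with _ | vs1 <;> rcases e2 : h2.1 l with _ | vs2 <;>
    simp [Option.orElse]
  exact absurd (by rw [mem_dom, e2]; simp) (h l (by rw [mem_dom, e1]; simp))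

lemma disj_union_iff {h1 h2 h3 : Heap I} :
    Disj h1 (union h2 h3) ↔ Disj h1 h2 ∧ Disj h1 h3 := by
  simp only [disj_iff, dom_union, Set.mem_union]
  constructor
  · intro h; exact ⟨fun l hl hl2 => h l hl (Or.inl hl2), fun l hl hl3 => h l hl (Or.inr hl3)⟩
  · rintro ⟨ha, hb⟩ l hl hc; rcases hc with hc | hc
    · exact ha l hl hc
    · exact hb l hl hc

lemma disj_union_iff' {h1 h2 h3 : Heap I} :
    Disj (union h1 h2) h3 ↔ Disj h1 h3 ∧ Disj h2 h3 := by
  constructor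
  · intro h
    have := disj_union_iff.mp (disj_comm h)
    exact ⟨disj_comm this.1, disj_comm this.2⟩
  · rintro ⟨ha, hb⟩
    exact disj_comm (disj_union_iff.mpr ⟨disj_comm ha, disj_comm hb⟩)

lemma empty_union (h : Heap I) : union (empty I) h = h := by
  apply ext'; intro l; rfl

lemma empty_disj (h : Heap I) : Disj (empty I) h := by
  rw [disj_iff]; intro l hl; exact absurd rfl (mem_dom.mp hl)

end Heap
end HEAP
section TERMS
variable {σ : Sig} {I : Interp σ}

lemma val_inj {s : σ.Srt} {u w : I.U s} (h : (⟨s, u⟩ : I.Val) = ⟨s, w⟩) : u = w := by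
  have := (Sigma.mk.inj_iff.mp h).2
  exact eq_of_heq this

lemma loc_term_var (t : Term σ) (h : t.sort = σ.loc) : t = Term.var σ.loc t.locIdx := by
  cases t with
  | var s n => cases h; rfl
  | cst s c =>
    exfalso
    have : s = σ.loc := h
    subst this
    exact σ.noLocConst.false c

lemma tval_subst (st : Store I) (θ : Subst σ) (t : Term σ) :
    tval (Store.comp st θ) t = tval st (Term.subst θ t) := by
  cases t with
  | var s n =>
    show (⟨s, Store.comp st θ s n⟩ : I.Val) = tval st (θ.app s n)
    unfold Store.comp
    have h : ∀ (u : Term σ) (e : Term.sort u = s),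
        (⟨s, e ▸ tvalSorted st u⟩ : I.Val) = tval st u := by
      intro u e; subst e; cases u <;> rfl
    exact h _ _
  | cst s c => rfl

lemma subst_loc_app (θ : Subst σ) (x : ℕ) :
    θ.app σ.loc x = Term.var σ.loc (θ.locApp x) :=
  loc_term_var _ (θ.sorted _ _)

lemma store_comp_loc (st : Store I) (θ : Subst σ) (x : ℕ) :
    Store.comp st θ σ.loc x = st σ.loc (θ.locApp x) := by
  have h1 := tval_subst st θ (Term.var σ.loc x)
  rw [show Term.subst θ (Term.var σ.loc x) = θ.app σ.loc x from rfl,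
    subst_loc_app θ x] at h1
  exact val_inj h1

lemma patom_holds_subst (st : Store I) (θ : Subst σ) (a : PAtom σ) :
    PAtom.holds st (PAtom.subst θ a) ↔ PAtom.holds (Store.comp st θ) a := by
  cases a with
  | eq t u => show _ ↔ (tval _ t = tval _ u); rw [tval_subst, tval_subst]; rfl
  | ne t u =>
    show _ ↔ (tval _ t ≠ tval _ u); rw [tval_subst, tval_subst]; rfl

lemma pureHolds_subst (st : Store I) (θ : Subst σ) (χ : PureF σ) :
    pureHolds st (χ.map (PAtom.subst θ)) ↔ pureHolds (Store.comp st θ) χ := by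
  unfold pureHolds
  constructor
  · intro h a ha
    exact (patom_holds_subst st θ a).mp (h _ (Multiset.mem_map_of_mem _ ha))
  · intro h a ha
    rcases Multiset.mem_map.mp ha with ⟨b, hb, rfl⟩
    exact (patom_holds_subst st θ b).mpr (h b hb)

end TERMS
section INV1
variable {σ : Sig} {I : Interp σ} {R : Set (Rule σ)}

lemma satA_pto_inv {st : Store I} {hh : Heap I} {x : ℕ} {ts : List (Term σ)}
    (h : SatA R I st hh (SAtom.pto x ts)) :
    hh = Heap.single (st σ.loc x) (ts.map (tval st)) := by
  cases h; rfl

lemma satS_zero_inv {st : Store I} {hh : Heap I} {m : Spatial σ} (h : SatS R I st hh m)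
    (hm : m = 0) : hh = Heap.empty I := by
  cases h with
  | emp => rfl
  | cons st h1 h2 a φ => simp at hm

end INV1
section SATS
variable {σ : Sig} {I : Interp σ} {R : Set (Rule σ)}

lemma satS_mem_inv {st : Store I} {hh : Heap I} {m : Spatial σ} {a : SAtom σ}
    (hsat : SatS R I st hh m) (ha : a ∈ m) :
    ∃ h1 h2, Heap.Disj h1 h2 ∧ hh = Heap.union h1 h2 ∧
      SatA R I st h1 a ∧ SatS R I st h2 (m.erase a) := by
  induction m using Multiset.strongInductionOn generalizing hh with
  | ih m IH =>
    cases hsat with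
    | emp => simp at ha
    | cons st h1 h2 a' φ' hA hS hD =>
      by_cases e : a' = a
      · subst e
        exact ⟨h1, h2, hD, rfl, hA, by rwa [Multiset.erase_cons_head]⟩
      · have ha' : a ∈ φ' := by
          rcases Multiset.mem_cons.mp ha with h | h
          · exact absurd h.symm e
          · exact h
        rcases IH φ' (Multiset.lt_cons_self φ' a') hS ha' with
          ⟨h21, h22, d, e2, sA, sS⟩
        subst e2
        rw [Heap.disj_union_iff] at hD
        refine ⟨h21, Heap.union h1 h22, ?_, ?_, sA, ?_⟩
        · exact Heap.disj_union_iff.mpr ⟨Heap.disj_comm hD.1, d⟩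
        · rw [← Heap.union_assoc, Heap.union_comm hD.1, Heap.union_assoc]
        · rw [Multiset.erase_cons_tail _ e]
          exact SatS.cons st h1 h22 a' _ hA sS hD.2

lemma satS_add_inv {st : Store I} {hh : Heap I} {m1 m2 : Spatial σ}
    (hsat : SatS R I st hh (m1 + m2)) :
    ∃ h1 h2, Heap.Disj h1 h2 ∧ hh = Heap.union h1 h2 ∧
      SatS R I st h1 m1 ∧ SatS R I st h2 m2 := by
  induction m1 using Multiset.induction generalizing hh with
  | empty =>
    refine ⟨Heap.empty I, hh, Heap.empty_disj hh, (Heap.empty_union hh).symm,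
      SatS.emp st, by simpa using hsat⟩
  | cons a m1 IH =>
    rw [Multiset.cons_add] at hsat
    rcases satS_mem_inv hsat (Multiset.mem_cons_self a _) with ⟨h1, h2, d, e, sA, sS⟩
    rw [Multiset.erase_cons_head] at sS
    rcases IH sS with ⟨h21, h22, d2, e2, s1, s2⟩
    subst e2; subst e
    rw [Heap.disj_union_iff] at d
    exact ⟨Heap.union h1 h21, h22,
      Heap.disj_union_iff'.mpr ⟨d.2, d2⟩, by rw [Heap.union_assoc],
      SatS.cons st h1 h21 a m1 sA s1 d.1, s2⟩

lemma satS_add {st : Store I} {h1 h2 : Heap I} {m1 m2 : Spatial σ}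
    (s1 : SatS R I st h1 m1) (s2 : SatS R I st h2 m2) (d : Heap.Disj h1 h2) :
    SatS R I st (Heap.union h1 h2) (m1 + m2) := by
  induction m1 using Multiset.induction generalizing h1 with
  | empty =>
    rw [satS_zero_inv s1 rfl, Heap.empty_union]
    simpa using s2
  | cons a m1 IH =>
    rcases satS_mem_inv s1 (Multiset.mem_cons_self a _) with ⟨h11, h12, d1, e1, sA, sS⟩
    rw [Multiset.erase_cons_head] at sS
    subst e1
    rw [Heap.disj_union_iff'] at d
    rw [Heap.union_assoc, Multiset.cons_add]
    exact SatS.cons st h11 _ a _ sA (IH sS d.2)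
      (Heap.disj_union_iff.mpr ⟨d1, d.1⟩)

end SATS
section SUBST
variable {σ : Sig} {I : Interp σ} {R : Set (Rule σ)}

lemma satA_pto_iff {st : Store I} {hh : Heap I} {x : ℕ} {ts : List (Term σ)} :
    SatA R I st hh (SAtom.pto x ts) ↔
      hh = Heap.single (st σ.loc x) (ts.map (tval st)) := by
  constructor
  · exact satA_pto_inv
  · rintro rfl; exact SatA.pto st x ts

lemma satA_pred_inv {st : Store I} {hh : Heap I} {p : σ.Pred} {x : ℕ}
    {args : List (Term σ)} (h : SatA R I st hh (SAtom.pred p x args)) :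
    ∃ r ∈ R, r.head = p ∧ ∃ st' : Store I,
      tval st' (r.paramTerm 0) = tval st (Term.var σ.loc x) ∧
      (∀ (i : ℕ) (hi : i < args.length),
        tval st' (r.paramTerm (i + 1)) = tval st (args[i]'hi)) ∧
      SatS R I st' hh r.body.sp ∧ pureHolds st' r.body.pu := by
  cases h with
  | pred st hh p x args r st' hr hhead h0 hargs hS hpu =>
    exact ⟨r, hr, hhead, st', h0, hargs, hS, hpu⟩

/-- Invariance of predicate-atom satisfaction under stores agreeing on the atom. -/
lemma satA_pred_invar {st1 st2 : Store I} {hh : Heap I} {p : σ.Pred} {x : ℕ}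
    {args : List (Term σ)}
    (h : SatA R I st1 hh (SAtom.pred p x args))
    (hx : tval st1 (Term.var σ.loc x) = tval st2 (Term.var σ.loc x))
    (hargs : ∀ t ∈ args, tval st1 t = tval st2 t) :
    SatA R I st2 hh (SAtom.pred p x args) := by
  rcases satA_pred_inv h with ⟨r, hr, hhead, st', h0, hA, hS, hpu⟩
  exact SatA.pred st2 hh p x args r st' hr hhead (h0.trans hx)
    (fun i hi => (hA i hi).trans (hargs _ (List.getElem_mem hi))) hS hpu

lemma satA_subst {st : Store I} {θ : Subst σ} {hh : Heap I} {a : SAtom σ} :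
    SatA R I st hh (SAtom.subst θ a) ↔ SatA R I (Store.comp st θ) hh a := by
  cases a with
  | pto x ts =>
    show SatA R I st hh (SAtom.pto (θ.locApp x) (ts.map (Term.subst θ))) ↔ _
    rw [satA_pto_iff, satA_pto_iff, store_comp_loc, List.map_map]
    have : (tval st ∘ Term.subst θ) = tval (Store.comp st θ) := by
      funext t; exact (tval_subst st θ t).symm
    rw [this]
  | pred p x args =>
    show SatA R I st hh (SAtom.pred p (θ.locApp x) (args.map (Term.subst θ))) ↔ _
    have hx : tval st (Term.var σ.loc (θ.locApp x)) =
        tval (Store.comp st θ) (Term.var σ.loc x) := by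
      rw [tval_subst]
      show tval st (Term.var σ.loc (θ.locApp x)) = tval st (θ.app σ.loc x)
      rw [subst_loc_app]
    constructor
    · intro h
      rcases satA_pred_inv h with ⟨r, hr, hhead, st', h0, hA, hS, hpu⟩
      refine SatA.pred _ hh p x args r st' hr hhead (h0.trans hx) ?_ hS hpu
      intro i hi
      have hi' : i < (args.map (Term.subst θ)).length := by simpa using hi
      have := hA i hi'
      rw [List.getElem_map] at this
      rw [this, ← tval_subst]
    · intro h
      rcases satA_pred_inv h with ⟨r, hr, hhead, st', h0, hA, hS, hpu⟩
      refine SatA.pred _ hh p _ _ r st' hr hhead (h0.trans hx.symm) ?_ hS hpu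
      intro i hi
      have hi' : i < args.length := by simpa using hi
      have := hA i hi'
      rw [this, tval_subst, List.getElem_map]

lemma satS_subst {st : Store I} {θ : Subst σ} {hh : Heap I} {m : Spatial σ} :
    SatS R I st hh (m.map (SAtom.subst θ)) ↔ SatS R I (Store.comp st θ) hh m := by
  induction m using Multiset.induction generalizing hh with
  | empty =>
    simp only [Multiset.map_zero]
    constructor
    · intro h; rw [satS_zero_inv h rfl]; exact SatS.emp _
    · intro h; rw [satS_zero_inv h rfl]; exact SatS.emp _
  | cons a m IH =>
    rw [Multiset.map_cons]
    constructor
    · intro h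
      rcases satS_mem_inv h (Multiset.mem_cons_self _ _) with ⟨h1, h2, d, e, sA, sS⟩
      rw [Multiset.erase_cons_head] at sS
      subst e
      exact SatS.cons _ h1 h2 a m (satA_subst.mp sA) (IH.mp sS) d
    · intro h
      rcases satS_mem_inv h (Multiset.mem_cons_self _ _) with ⟨h1, h2, d, e, sA, sS⟩
      rw [Multiset.erase_cons_head] at sS
      subst e
      exact SatS.cons _ h1 h2 _ _ (satA_subst.mpr sA) (IH.mpr sS) d

/-- Invariance of satisfaction for multisets of predicate atoms. -/
lemma satS_pred_invar {st1 st2 : Store I} {hh : Heap I} {m : Spatial σ}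
    (h : SatS R I st1 hh m)
    (hshape : ∀ a ∈ m, ∃ (q : σ.Pred) (z : ℕ) (args : List (Term σ)),
      a = SAtom.pred q z args ∧
      tval st1 (Term.var σ.loc z) = tval st2 (Term.var σ.loc z) ∧
      ∀ t ∈ args, tval st1 t = tval st2 t) :
    SatS R I st2 hh m := by
  induction m using Multiset.induction generalizing hh with
  | empty => rw [satS_zero_inv h rfl]; exact SatS.emp _
  | cons a m IH =>
    rcases satS_mem_inv h (Multiset.mem_cons_self _ _) with ⟨h1, h2, d, e, sA, sS⟩
    rw [Multiset.erase_cons_head] at sS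
    subst e
    rcases hshape a (Multiset.mem_cons_self _ _) with ⟨q, z, args, rfl, hz, hargs⟩
    exact SatS.cons _ h1 h2 _ _ (satA_pred_invar sA hz hargs)
      (IH sS (fun b hb => hshape b (Multiset.mem_cons_of_mem hb))) d

end SUBST
section ALLOC
variable {σ : Sig} {I : Interp σ} {R : Set (Rule σ)}

lemma satA_root_mem (hPR : ∀ r ∈ R, Rule.IsPRule r) {st : Store I} {hh : Heap I}
    {a : SAtom σ} (h : SatA R I st hh a) : st σ.loc a.root ∈ Heap.dom hh := by
  cases a with
  | pto x ts =>
    rw [satA_pto_inv h]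
    show st σ.loc x ∈ Heap.dom _
    rw [Heap.dom_single]
    rfl
  | pred p x args =>
    rcases satA_pred_inv h with ⟨r, hr, hhead, st', h0, hA, hS, hpu⟩
    rcases hPR r hr with ⟨ys, ps, hsp, -⟩
    rw [hsp] at hS
    rcases satS_mem_inv hS (Multiset.mem_cons_self _ _) with ⟨h1, h2, d, e, sA, -⟩
    have h1e := satA_pto_inv sA
    have hroot : st' σ.loc (r.param 0) = st σ.loc x := by
      have e0 : σ.psort r.head 0 = σ.loc := σ.psort_zero r.head
      simp only [Rule.paramTerm, tval] at h0
      rw [e0] at h0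
      exact val_inj h0
    subst e
    rw [Heap.dom_union]
    left
    rw [h1e, Heap.dom_single]
    simp only [SAtom.root]
    rw [← hroot]
    exact rfl

lemma satS_alloc (hPR : ∀ r ∈ R, Rule.IsPRule r) {st : Store I} {hh : Heap I}
    {m : Spatial σ} (h : SatS R I st hh m) :
    ((alloc m).map (st σ.loc)).Nodup ∧
      ∀ y ∈ (alloc m).map (st σ.loc), y ∈ Heap.dom hh := by
  induction m using Multiset.induction generalizing hh with
  | empty => simp [alloc]
  | cons a m IH =>
    rcases satS_mem_inv h (Multiset.mem_cons_self _ _) with ⟨h1, h2, d, e, sA, sS⟩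
    rw [Multiset.erase_cons_head] at sS
    subst e
    rcases IH sS with ⟨hnd, hdom⟩
    have hroot := satA_root_mem hPR sA
    have halloc : alloc (a ::ₘ m) = a.root ::ₘ alloc m := by
      simp [alloc]
    rw [halloc, Multiset.map_cons]
    constructor
    · rw [Multiset.nodup_cons]
      refine ⟨fun hmem => ?_, hnd⟩
      have := hdom _ hmem
      exact (Heap.disj_iff.mp d) _ hroot this
    · intro y hy
      rw [Heap.dom_union]
      rcases Multiset.mem_cons.mp hy with rfl | hy
      · exact Or.inl hroot
      · exact Or.inr (hdom y hy)

lemma pair_le_of_mem {α : Type*} [DecidableEq α] {x y : α} {s : Multiset α}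
    (hx : x ∈ s) (hy : y ∈ s) (hne : x ≠ y) : ({x, y} : Multiset α) ≤ s := by
  rw [Multiset.le_iff_count]
  intro a
  rw [Multiset.insert_eq_cons, Multiset.count_cons, Multiset.count_singleton]
  by_cases ha : a = x
  · subst ha
    rw [if_neg hne, if_pos rfl]
    have := Multiset.one_le_count_iff_mem.mpr hx
    omega
  · by_cases hb : a = y
    · subst hb
      rw [if_pos rfl, if_neg ha]
      have := Multiset.one_le_count_iff_mem.mpr hy
      omega
    · simp [ha, hb]

lemma pair_le_add_cases {x1 x2 : ℕ} {A V : Multiset ℕ}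
    (h : ({x1, x2} : Multiset ℕ) ≤ A + V) :
    ({x1, x2} : Multiset ℕ) ≤ A ∨ ({x1, x2} : Multiset ℕ) ≤ V ∨
      (x1 ∈ A ∧ x2 ∈ V) ∨ (x2 ∈ A ∧ x1 ∈ V) := by
  by_cases e : x1 = x2
  · subst e
    have hc := Multiset.le_iff_count.mp h x1
    rw [Multiset.count_add] at hc
    have hc2 : Multiset.count x1 ({x1, x1} : Multiset ℕ) = 2 := by
      simp [Multiset.insert_eq_cons]
    rw [hc2] at hc
    rcases Nat.lt_or_ge (Multiset.count x1 A) 2 with hA | hA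
    · rcases Nat.lt_or_ge (Multiset.count x1 V) 2 with hV | hV
      · have h1 : 1 ≤ Multiset.count x1 A := by omega
        have h2 : 1 ≤ Multiset.count x1 V := by omega
        exact Or.inr (Or.inr (Or.inl ⟨Multiset.one_le_count_iff_mem.mp h1,
          Multiset.one_le_count_iff_mem.mp h2⟩))
      · right; left
        rw [Multiset.le_iff_count]
        intro a
        by_cases ha : a = x1
        · subst ha; rw [hc2]; exact hV
        · simp [Multiset.insert_eq_cons, Multiset.count_cons, Multiset.count_singleton, ha]
    · left
      rw [Multiset.le_iff_count]
      intro a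
      by_cases ha : a = x1
      · subst ha; rw [hc2]; exact hA
      · simp [Multiset.insert_eq_cons, Multiset.count_cons, Multiset.count_singleton, ha]
  · have h1 : x1 ∈ A + V := Multiset.mem_of_le h (by simp)
    have h2 : x2 ∈ A + V := Multiset.mem_of_le h (by simp)
    rw [Multiset.mem_add] at h1 h2
    rcases h1 with h1 | h1 <;> rcases h2 with h2 | h2
    · exact Or.inl (pair_le_of_mem h1 h2 e)
    · exact Or.inr (Or.inr (Or.inl ⟨h1, h2⟩))
    · exact Or.inr (Or.inr (Or.inr ⟨h2, h1⟩))
    · exact Or.inr (Or.inl (pair_le_of_mem h1 h2 e))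

lemma entails_sound (hPR : ∀ r ∈ R, Rule.IsPRule r) {lhs : SymHeap σ} {V : Multiset ℕ}
    {χ : PureF σ} (hent : Entails lhs V χ) {st : Store I} {h : Heap I}
    (hsat : SatH R I st h lhs) (hV : ∀ x ∈ V, st σ.loc x ∉ Heap.dom h)
    (hinj : StoreInjOn st V) : pureHolds st χ := by
  intro ζa hζa
  rcases hent ζa hζa with hin | ⟨v, rfl⟩ | ⟨s1, c1, s2, c2, rfl, hne⟩ | ⟨x1, x2, rfl, hle⟩
  · exact hsat.2 ζa hin
  · show tval st _ = tval st _
    rfl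
  · show tval st (Term.cst s1 c1) ≠ tval st (Term.cst s2 c2)
    intro he
    apply hne
    obtain ⟨hs, hc⟩ := Sigma.mk.inj_iff.mp he
    subst hs
    have hcc : I.cval c1 = I.cval c2 := eq_of_heq hc
    have := I.cval_inj s1 hcc
    rw [this]
  · show tval st (Term.var σ.loc x1) ≠ tval st (Term.var σ.loc x2)
    intro he
    have hv : st σ.loc x1 = st σ.loc x2 := val_inj he
    have halloc := satS_alloc hPR hsat.1
    rcases pair_le_add_cases hle with hA | hV' | ⟨hm1, hm2⟩ | ⟨hm1, hm2⟩
    · have hmap := Multiset.map_le_map (f := st σ.loc) hA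
      have hcnt := Multiset.count_le_of_le (st σ.loc x2) hmap
      have hpair : Multiset.map (st σ.loc) ({x1, x2} : Multiset ℕ) =
          ({st σ.loc x1, st σ.loc x2} : Multiset I.Loc) := by
        simp [Multiset.insert_eq_cons]
      rw [hpair, hv] at hcnt
      have h2 : Multiset.count (st σ.loc x2)
          ({st σ.loc x2, st σ.loc x2} : Multiset I.Loc) = 2 := by
        simp [Multiset.insert_eq_cons]
      rw [h2] at hcnt
      have := Multiset.nodup_iff_count_le_one.mp halloc.1 (st σ.loc x2)
      have : Multiset.count (st σ.loc x2) (Multiset.map (st σ.loc) (SymHeap.alloc lhs)) ≤ 1 := this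
      omega
    · exact hinj x1 x2 hV' hv
    · have hd1 : st σ.loc x1 ∈ Heap.dom h := halloc.2 _ (Multiset.mem_map_of_mem _ hm1)
      rw [hv] at hd1
      exact hV x2 hm2 hd1
    · have hd1 : st σ.loc x2 ∈ Heap.dom h := halloc.2 _ (Multiset.mem_map_of_mem _ hm1)
      rw [← hv] at hd1
      exact hV x1 hm2 hd1

end ALLOC
section MAIN
variable {σ : Sig} {I : Interp σ}

lemma list_map_eq_forall {α β : Type*} {f g : α → β} :
    ∀ {l : List α}, l.map f = l.map g → ∀ t ∈ l, f t = g t := by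
  intro l
  induction l with
  | nil => intro _ t ht; simp at ht
  | cons a l IH =>
    intro h t ht
    simp only [List.map_cons, List.cons.injEq] at h
    rcases List.mem_cons.mp ht with rfl | ht
    · exact h.1
    · exact IH h.2 t ht

theorem STATEMENT_18' (R : Set (Rule σ)) (hR : GoodRules R I)
    (x : ℕ) (ys : List (Term σ)) (φ : Spatial σ) (ξ : PureF σ)
    (p : σ.Pred) (zs : List (Term σ)) (ψ : Spatial σ) (ζ : PureF σ) (V : Multiset ℕ)
    (us : List (Term σ)) (ψ' : Spatial σ) (ζ' : PureF σ)
    (θ : Subst σ)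
    (hunf : Unfolds R p (Term.var σ.loc x :: zs) ⟨(SAtom.pto x us) ::ₘ ψ', ζ'⟩)
    (hdom : ∀ v : Vr σ, θ.app v.1 v.2 ≠ Term.var v.1 v.2 →
      Term.var v.1 v.2 ∈ us ∧ Term.var v.1 v.2 ≠ Term.var σ.loc x ∧
        Term.var v.1 v.2 ∉ zs)
    (happ : us.map (Term.subst θ) = ys)
    (hent : Entails ⟨(SAtom.pto x ys) ::ₘ φ, ξ⟩ V (ζ'.map (PAtom.subst θ))) :
    ∀ h : Heap I,
      (∃ st : Store I, CounterModel R I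
        ⟨⟨(SAtom.pto x ys) ::ₘ φ, ξ⟩, ⟨(SAtom.pred p x zs) ::ₘ ψ, ζ⟩, V⟩ st h) ↔
      (∃ st' : Store I, CounterModel R I
        ⟨⟨(SAtom.pto x ys) ::ₘ φ, ξ⟩,
         ⟨(SAtom.pto x ys) ::ₘ (ψ'.map (SAtom.subst θ) + ψ), ζ⟩, V⟩ st' h) := by
  intro h
  obtain ⟨r, hr, hhead, hlen, ρ, hparam, hfresh, hinj0, hbody⟩ := hunf
  obtain ⟨ys₀, ps, hsp, hpreds, hpu', hroots, hnodup, hargs'⟩ := hR.prules r hr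
  rw [List.length_cons] at hlen
  -- decompose the substituted body
  have hspc : (SAtom.pto x us ::ₘ ψ' : Spatial σ) =
      Multiset.map (SAtom.subst ρ) r.body.sp := by
    have := congrArg SymHeap.sp hbody
    simpa [SymHeap.subst] using this
  have hζ' : ζ' = Multiset.map (PAtom.subst ρ) r.body.pu := by
    have := congrArg SymHeap.pu hbody
    simpa [SymHeap.subst] using this
  have hp0 := hparam 0 (by simp)
  rw [σ.psort_zero p] at hp0
  simp only [List.getElem_cons_zero] at hp0
  have hloc0 : ρ.locApp (r.param 0) = x := by
    unfold Subst.locApp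
    rw [hp0]
    rfl
  have hhead_subst : SAtom.subst ρ (SAtom.pto (r.param 0) ys₀) =
      SAtom.pto x (ys₀.map (Term.subst ρ)) := by
    simp [SAtom.subst, hloc0]
  rw [hsp, Multiset.map_cons, hhead_subst] at hspc
  rcases Multiset.cons_eq_cons.mp hspc with ⟨he1, he2⟩ | ⟨-, cs, -, hmem⟩
  swap
  · exfalso
    have : SAtom.pto x us ∈ Multiset.map (SAtom.subst ρ) ps := by
      rw [hmem]; exact Multiset.mem_cons_self _ _
    rcases Multiset.mem_map.mp this with ⟨b, hb, hbe⟩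
    rcases hpreds b hb with ⟨q, z, args, rfl⟩
    simp [SAtom.subst] at hbe
  have hus : us = ys₀.map (Term.subst ρ) :=
    ((SAtom.pto.injEq _ _ _ _).mp he1.symm |>.2).symm
  have hψ' : ψ' = Multiset.map (SAtom.subst ρ) ps := he2
  -- θ fixes x and the zs
  have hfix : ∀ t ∈ (Term.var σ.loc x :: zs), Term.subst θ t = t := by
    intro t ht
    cases t with
    | cst s c => rfl
    | var s n =>
      show θ.app s n = Term.var s n
      by_contra hne
      rcases hdom (s, n) hne with ⟨-, hne_x, hnotzs⟩
      rcases List.mem_cons.mp ht with he | hzs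
      · exact hne_x he
      · exact hnotzs hzs
  -- key parameter computation
  have keyF5 : ∀ (st : Store I) (i : ℕ) (hi : i < (Term.var σ.loc x :: zs).length),
      tval (Store.comp (Store.comp st θ) ρ) (r.paramTerm i) =
        tval st ((Term.var σ.loc x :: zs)[i]'hi) := by
    intro st i hi
    have h1 : r.paramTerm i = Term.var (σ.psort p i) (r.param i) := by
      rw [Rule.paramTerm, hhead]
    rw [h1, tval_subst]
    show tval (Store.comp st θ) (ρ.app (σ.psort p i) (r.param i)) = _
    rw [hparam i hi, tval_subst, hfix _ (List.getElem_mem hi)]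
  have keyF7 : ∀ st : Store I,
      ys₀.map (tval (Store.comp (Store.comp st θ) ρ)) = ys.map (tval st) := by
    intro st
    have hfun : tval (Store.comp (Store.comp st θ) ρ) =
        (tval st ∘ (Term.subst θ ∘ Term.subst ρ)) := by
      funext t
      simp [Function.comp, tval_subst]
    rw [← happ, hus, List.map_map, hfun, List.map_map]
    rfl
  have keyF8 : ∀ st : Store I,
      Store.comp (Store.comp st θ) ρ σ.loc (r.param 0) = st σ.loc x := by
    intro st
    have h0 := keyF5 st 0 (by simp)
    simp only [List.getElem_cons_zero, Rule.paramTerm, tval] at h0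
    rw [hhead, σ.psort_zero p] at h0
    exact val_inj h0
  -- agreement on the atoms of ps
  have hagree : ∀ stA stB : Store I,
      (∀ (i : ℕ) (hi : i < zs.length + 1),
        tval stA (r.paramTerm i) = tval stB (r.paramTerm i)) →
      ys₀.map (tval stA) = ys₀.map (tval stB) →
      ∀ a ∈ ps, ∃ (q : σ.Pred) (z : ℕ) (args : List (Term σ)),
        a = SAtom.pred q z args ∧
        tval stA (Term.var σ.loc z) = tval stB (Term.var σ.loc z) ∧
        ∀ t ∈ args, tval stA t = tval stB t := by
    intro stA stB hpar hys a ha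
    have hterm : ∀ t : Term σ, t ∈ Rule.paramTermSet r ∨ t ∈ ys₀ ∨
        (∃ (s : σ.Srt) (c : σ.Const s), t = Term.cst s c) → tval stA t = tval stB t := by
      rintro t (⟨i, hi, rfl⟩ | hy | ⟨s, c, rfl⟩)
      · rw [hhead, ← hlen] at hi
        exact hpar i hi
      · exact list_map_eq_forall hys t hy
      · rfl
    rcases hpreds a ha with ⟨q, z, args, rfl⟩
    refine ⟨q, z, args, rfl, ?_, ?_⟩
    · have hz : Term.var σ.loc z ∈
          {t : Term σ | ∃ a ∈ ps, t = Term.var σ.loc (SAtom.root a)} :=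
        ⟨_, ha, rfl⟩
      rw [hroots] at hz
      exact hterm _ (Or.inr (Or.inl hz.1))
    · intro t ht
      exact hterm t (hargs' _ ha q z args rfl t ht)
  -- the key equivalence for a fixed store
  have key : ∀ st : Store I,
      SatH R I st h ⟨(SAtom.pto x ys) ::ₘ φ, ξ⟩ →
      (∀ v ∈ V, st σ.loc v ∉ Heap.dom h) → StoreInjOn st V →
      (SatH R I st h ⟨(SAtom.pred p x zs) ::ₘ ψ, ζ⟩ ↔
       SatH R I st h ⟨(SAtom.pto x ys) ::ₘ (ψ'.map (SAtom.subst θ) + ψ), ζ⟩) := by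
    intro st hL hVd hVi
    set ST := Store.comp (Store.comp st θ) ρ with hST
    have hpu'' : pureHolds ST r.body.pu := by
      have hpure : pureHolds st (ζ'.map (PAtom.subst θ)) :=
        entails_sound hR.prules hent hL hVd hVi
      rw [hζ'] at hpure
      exact (pureHolds_subst _ ρ _).mp ((pureHolds_subst st θ _).mp hpure)
    have hlook : h.1 (st σ.loc x) = some (ys.map (tval st)) := by
      rcases satS_mem_inv hL.1 (Multiset.mem_cons_self _ _) with ⟨h1, h2, d, e, sA, -⟩
      have h1e := satA_pto_inv sA
      subst e
      rw [Heap.union_val_left (by rw [h1e, Heap.dom_single]; exact rfl), h1e,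
        Heap.single_val_self]
    constructor
    · -- RHS_C → RHS_P
      rintro ⟨hsp1, hpu1⟩
      rcases satS_mem_inv hsp1 (Multiset.mem_cons_self _ _) with
        ⟨h1, h2, d, e, sApred, sSψ⟩
      rw [Multiset.erase_cons_head] at sSψ
      rcases satA_pred_inv sApred with ⟨r2, hr2, hhead2, st2, h0, hargs2, hS2, hpu2⟩
      obtain ⟨ys2, ps2, hsp2', hpreds2, -⟩ := hR.prules r2 hr2
      rw [hsp2'] at hS2
      rcases satS_mem_inv hS2 (Multiset.mem_cons_self _ _) with
        ⟨h1a, h1b, d1, e1, sA2pto, sS2ps⟩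
      rw [Multiset.erase_cons_head] at sS2ps
      have h1ae := satA_pto_inv sA2pto
      have hroot2 : st2 σ.loc (r2.param 0) = st σ.loc x := by
        simp only [Rule.paramTerm, tval] at h0
        rw [σ.psort_zero r2.head] at h0
        exact val_inj h0
      have hstx1a : st σ.loc x ∈ Heap.dom h1a := by
        rw [h1ae, Heap.dom_single, ← hroot2]; exact rfl
      have hlook1 : h.1 (st σ.loc x) = some (ys2.map (tval st2)) := by
        subst e; subst e1
        rw [Heap.union_val_left (by rw [Heap.dom_union]; exact Or.inl hstx1a),
          Heap.union_val_left hstx1a, h1ae, ← hroot2, Heap.single_val_self]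
      have hW : ys2.map (tval st2) = ys.map (tval st) :=
        Option.some.inj (hlook1.symm.trans hlook)
      have hpareq : ∀ (i : ℕ) (hi : i < (Term.var σ.loc x :: zs).length),
          tval st2 (r2.paramTerm i) = tval st ((Term.var σ.loc x :: zs)[i]'hi) := by
        intro i hi
        cases i with
        | zero => simpa using h0
        | succ j =>
          have hj : j < zs.length := by simpa using hi
          simpa using hargs2 j hj
      have hre : r2 = r := by
        by_contra hne
        refine hR.deterministic r2 hr2 r hr hne (hhead2.trans hhead.symm)
          ys2 ps2 ys₀ ps hsp2' hsp ⟨st2, ST, ?_, hW.trans (keyF7 st).symm, hpu2, hpu''⟩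
        intro i hi
        rw [hhead2, ← hlen] at hi
        rw [hpareq i (by simpa using hi), keyF5 st i (by simpa using hi)]
      subst hre
      have hcs := hsp2'.symm.trans hsp
      rcases Multiset.cons_eq_cons.mp hcs with ⟨he1', he2'⟩ | ⟨-, cs, -, hmem⟩
      swap
      · exfalso
        have : SAtom.pto (r2.param 0) ys2 ∈ ps := by
          rw [hmem]; exact Multiset.mem_cons_self _ _
        rcases hpreds _ this with ⟨q, z, args, hqe⟩
        simp at hqe
      have hys2 : ys2 = ys₀ := ((SAtom.pto.injEq _ _ _ _).mp he1').2
      have hps2 : ps2 = ps := he2'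
      subst hys2; subst hps2
      -- build the premise's right-hand side
      refine ⟨?_, hpu1⟩
      subst e; subst e1
      rw [Heap.union_assoc]
      have hdisj : Heap.Disj h1a (Heap.union h1b h2) := by
        rw [Heap.disj_union_iff]
        exact ⟨d1, (Heap.disj_union_iff'.mp d).1⟩
      refine SatS.cons st h1a (Heap.union h1b h2) _ _ ?_ ?_ hdisj
      · rw [satA_pto_iff, h1ae, hroot2, hW]
      · have hd2 : Heap.Disj h1b h2 := (Heap.disj_union_iff'.mp d).2
        refine satS_add ?_ sSψ hd2
        rw [hψ']
        rw [satS_subst, satS_subst]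
        refine satS_pred_invar sS2ps (hagree st2 ST ?_ ?_)
        · intro i hi
          rw [hpareq i (by simpa using hi), keyF5 st i (by simpa using hi)]
        · rw [keyF7 st, ← hW]
    · -- RHS_P → RHS_C
      rintro ⟨hsp1, hpu1⟩
      rcases satS_mem_inv hsp1 (Multiset.mem_cons_self _ _) with
        ⟨hp, hrest, d, e, sApto, sSrest⟩
      rw [Multiset.erase_cons_head] at sSrest
      rcases satS_add_inv sSrest with ⟨hA, hB, dAB, eAB, sA, sB⟩
      refine ⟨?_, hpu1⟩
      subst e; subst eAB
      rw [← Heap.union_assoc]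
      have hdp : Heap.Disj hp hA ∧ Heap.Disj hp hB := Heap.disj_union_iff.mp d
      refine SatS.cons st (Heap.union hp hA) hB _ _ ?_ sB
        (Heap.disj_union_iff'.mpr ⟨hdp.2, dAB⟩)
      refine SatA.pred st _ p x zs r ST hr hhead ?_ ?_ ?_ hpu''
      · exact keyF5 st 0 (by simp)
      · intro i hi
        exact keyF5 st (i + 1) (by simpa using Nat.succ_lt_succ hi)
      · rw [hsp]
        refine SatS.cons ST hp hA _ _ ?_ ?_ hdp.1
        · rw [satA_pto_iff, hST, keyF8 st, keyF7 st, satA_pto_inv sApto]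
        · rw [hψ'] at sA
          rw [hST]
          exact (satS_subst.mp ((satS_subst (θ := θ)).mp sA))
  constructor
  · rintro ⟨st, hL, hnR, hVd, hVi⟩
    exact ⟨st, hL, fun hprem => hnR ((key st hL hVd hVi).mpr hprem), hVd, hVi⟩
  · rintro ⟨st, hL, hnR, hVd, hVi⟩
    exact ⟨st, hL, fun hprem => hnR ((key st hL hVd hVi).mp hprem), hVd, hVi⟩

end MAIN

/-- soundness and invertibility of the imitation rule I: under the
side conditions (i)-(iv), for every heap `h` the conclusion has a counter-model
`(s,h)` iff the premise has a counter-model `(s',h)`. -/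
theorem STATEMENT_18 {σ : Sig} {I : Interp σ} (R : Set (Rule σ)) (hR : GoodRules R I)
    (x : ℕ) (ys : List (Term σ)) (φ : Spatial σ) (ξ : PureF σ)
    (p : σ.Pred) (zs : List (Term σ)) (ψ : Spatial σ) (ζ : PureF σ) (V : Multiset ℕ)
    (us : List (Term σ)) (ψ' : Spatial σ) (ζ' : PureF σ)
    (θ : Subst σ)
    -- (i) `p(x,z⃗) ⇐_ℜ (x ↦ (u₁,…,uₖ) * ψ') ⋏ ζ'`
    (hunf : Unfolds R p (Term.var σ.loc x :: zs) ⟨(SAtom.pto x us) ::ₘ ψ', ζ'⟩)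
    -- (ii) `dom(σ) ⊆ {u₁,…,uₖ} ∖ ({x} ∪ z⃗)`
    (hdom : ∀ v : Vr σ, θ.app v.1 v.2 ≠ Term.var v.1 v.2 →
      Term.var v.1 v.2 ∈ us ∧ Term.var v.1 v.2 ≠ Term.var σ.loc x ∧
        Term.var v.1 v.2 ∉ zs)
    -- (iii) `uᵢσ = yᵢ` for all `i`
    (happ : us.map (Term.subst θ) = ys)
    -- (iv) `(x ↦ (y₁,…,yₖ) * φ) ⋏ ξ ▷_V ζ'σ`
    (hent : Entails ⟨(SAtom.pto x ys) ::ₘ φ, ξ⟩ V (ζ'.map (PAtom.subst θ))) :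
    ∀ h : Heap I,
      (∃ st : Store I, CounterModel R I
        ⟨⟨(SAtom.pto x ys) ::ₘ φ, ξ⟩, ⟨(SAtom.pred p x zs) ::ₘ ψ, ζ⟩, V⟩ st h) ↔
      (∃ st' : Store I, CounterModel R I
        ⟨⟨(SAtom.pto x ys) ::ₘ φ, ξ⟩,
         ⟨(SAtom.pto x ys) ::ₘ (ψ'.map (SAtom.subst θ) + ψ), ζ⟩, V⟩ st' h) :=
  STATEMENT_18' R hR x ys φ ξ p zs ψ ζ V us ψ' ζ' θ hunf hdom happ hent

end SLID
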